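/- Let γ: [0,a*] → ℝ≥0 be integrable with ∫_σ^{a*} γ(a)da > 0 for every σ ∈ [0,a*). Let φ, ψ ∈ C([-a*,0]; ℝ≥0) with φ ≤ ψ and φ(s) < ψ(s) for all s in some nonempty open interval (α̲, ᾱ) ⊆ (-a*,0). Then the function σ(t) = ∫_t^{a*} γ(a)(ψ(t-a) - φ(t-a))da, defined on [0,a*], is not identically zero; in fact σ(α̲ + a*) > 0. -/
import Mathlib

open MeasureTheory Real Set intervalIntegral

/-- the forcing term built from two ordered distinct histories is not
identically zero; it is positive at `α̲ + a*`. -/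
theorem forcing_not_identically_zero
    (astar : ℝ) (hastar : 0 < astar)
    (γ : ℝ → ℝ) (hγint : IntegrableOn γ (Icc 0 astar)) (hγpos : ∀ a, 0 ≤ γ a)
    (hγtail : ∀ s : ℝ, s ∈ Ico 0 astar → 0 < ∫ a in s..astar, γ a)
    (φ ψ : ℝ → ℝ)
    (hφcont : ContinuousOn φ (Icc (-astar) 0)) (hψcont : ContinuousOn ψ (Icc (-astar) 0))
    (hφpos : ∀ s ∈ Icc (-astar) 0, 0 ≤ φ s)
    (hle : ∀ s ∈ Icc (-astar) 0, φ s ≤ ψ s)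
    (αlow αhigh : ℝ) (hαlt : αlow < αhigh)
    (hsub : Ioo αlow αhigh ⊆ Ioo (-astar) 0)
    (hstrict : ∀ s ∈ Ioo αlow αhigh, φ s < ψ s)
    (σ : ℝ → ℝ)
    (hσ : ∀ t ∈ Icc 0 astar, σ t = ∫ a in t..astar, γ a * (ψ (t - a) - φ (t - a))) :
    0 < σ (αlow + astar) ∧ ¬ (∀ t ∈ Icc 0 astar, σ t = 0) := by
  -- basic bounds
  have hIcc : Icc αlow αhigh ⊆ Icc (-astar) 0 := by
    have h1 : closure (Ioo αlow αhigh) ⊆ closure (Ioo (-astar) 0) := closure_mono hsub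
    rw [closure_Ioo hαlt.ne, closure_Ioo (by linarith : (-astar) ≠ 0)] at h1
    exact h1
  have hal : -astar ≤ αlow := (hIcc (left_mem_Icc.mpr hαlt.le)).1
  have hah : αhigh ≤ 0 := (hIcc (right_mem_Icc.mpr hαlt.le)).2
  set t := αlow + astar with ht
  have htmem : t ∈ Icc 0 astar := ⟨by linarith, by linarith⟩
  set s := t - αhigh with hs
  have hts : t ≤ s := by simp [hs]; linarith
  have hsmem : s ∈ Ico 0 astar := ⟨by simp [hs, ht]; linarith, by simp [hs, ht]; linarith⟩
  set f : ℝ → ℝ := fun a => γ a * (ψ (t - a) - φ (t - a)) with hf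
  -- map a ↦ t - a sends [t, astar] into [-astar, 0]
  have hmap : ∀ a ∈ Icc t astar, t - a ∈ Icc (-astar) 0 := by
    intro a ha
    constructor <;> [linarith [ha.2]; linarith [ha.1, htmem.1]]
  -- integrability of f on Icc t astar
  have hfint : IntegrableOn f (Icc t astar) := by
    have hγ' : IntegrableOn γ (Icc t astar) :=
      hγint.mono_set (Icc_subset_Icc htmem.1 le_rfl)
    have hcont : ContinuousOn (fun a => ψ (t - a) - φ (t - a)) (Icc t astar) := by
      have hc : ContinuousOn (fun a : ℝ => t - a) (Icc t astar) :=
        (continuous_const.sub continuous_id).continuousOn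
      exact (hψcont.comp hc hmap).sub (hφcont.comp hc hmap)
    exact hγ'.mul_continuousOn hcont isCompact_Icc
  have hfint' : IntegrableOn f (Ioc t astar) := hfint.mono_set Ioc_subset_Icc_self
  -- nonnegativity of f on Ioc t astar
  have hfnn : ∀ a ∈ Ioc t astar, 0 ≤ f a := by
    intro a ha
    have h1 := hmap a ⟨ha.1.le, ha.2⟩
    have := hle _ h1
    exact mul_nonneg (hγpos a) (by linarith)
  have hfnn_ae : 0 ≤ᵐ[volume.restrict (Ioc t astar)] f := by
    filter_upwards [ae_restrict_mem measurableSet_Ioc] with a ha using hfnn a ha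
  -- the integral of γ over Ioc s astar is positive, so γ has positive-measure support there
  have hγs : 0 < ∫ a in Ioc s astar, γ a := by
    have := hγtail s hsmem
    rwa [intervalIntegral.integral_of_le hsmem.2.le] at this
  have hγint_s : IntegrableOn γ (Ioc s astar) :=
    hγint.mono_set (fun x hx => ⟨le_trans hsmem.1 hx.1.le, hx.2⟩)
  have hγnn_ae : 0 ≤ᵐ[volume.restrict (Ioc s astar)] γ :=
    Filter.Eventually.of_forall (fun a => hγpos a)
  have hsupp : 0 < volume (Function.support γ ∩ Ioc s astar) :=
    (setIntegral_pos_iff_support_of_nonneg_ae hγnn_ae hγint_s).mp hγs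
  -- hence f has positive-measure support in Ioc t astar
  have hsub2 : Function.support γ ∩ Ioo s astar ⊆ Function.support f ∩ Ioc t astar := by
    rintro a ⟨hγa, ha⟩
    have hta : t - a ∈ Ioo αlow αhigh := by
      constructor
      · simp only [ht]; linarith [ha.2]
      · have : s < a := ha.1; simp only [hs] at this; linarith
    have hlt := hstrict _ hta
    refine ⟨?_, ⟨lt_of_le_of_lt hts ha.1, ha.2.le⟩⟩
    simp only [Function.mem_support, hf]
    exact mul_ne_zero hγa (by linarith)
  have hsupp2 : 0 < volume (Function.support f ∩ Ioc t astar) := by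
    have heq : volume (Function.support γ ∩ Ioc s astar)
        = volume (Function.support γ ∩ Ioo s astar) := by
      apply le_antisymm
      · calc volume (Function.support γ ∩ Ioc s astar)
            ≤ volume ((Function.support γ ∩ Ioo s astar) ∪ {astar}) := by
              apply measure_mono
              rintro x ⟨hx1, hx2⟩
              rcases eq_or_lt_of_le hx2.2 with h | h
              · exact Or.inr (by simp [h])
              · exact Or.inl ⟨hx1, hx2.1, h⟩
          _ ≤ volume (Function.support γ ∩ Ioo s astar) + volume ({astar} : Set ℝ) :=
              measure_union_le _ _
          _ = volume (Function.support γ ∩ Ioo s astar) := by simp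
      · exact measure_mono (inter_subset_inter_right _ Ioo_subset_Ioc_self)
    exact lt_of_lt_of_le (heq ▸ hsupp) (measure_mono hsub2)
  -- positivity of σ t
  have hpos : 0 < σ t := by
    rw [hσ t htmem, intervalIntegral.integral_of_le htmem.2]
    exact (setIntegral_pos_iff_support_of_nonneg_ae hfnn_ae hfint').mpr hsupp2
  exact ⟨hpos, fun h => absurd (h t htmem) (ne_of_gt hpos)⟩
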